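/- arXiv:2504.03318 — 2 statements merged into one kernel-verified Lean document; each statement's English description precedes it below -/
import Mathlib

section
/- Let σ : ℝ → ℝ be η-Lipschitz and let Pool be a max-pooling operation on tensors in ℝ^{M×N×d} in which each entry of the input tensor appears in at most m pooling windows. Then the composition Pool ∘ σ (applied entrywise) is m^{1/p}·η-Lipschitz with respect to the entrywise ℓ_p norm for every p ≥ 1. -/
lemma abs_sup'_sub_sup'_le {α : Type*} (s : Finset α) (hs : s.Nonempty)
    (f g : α → ℝ) :
    |s.sup' hs f - s.sup' hs g| ≤ s.sup' hs (fun a => |f a - g a|) := by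
  rw [abs_sub_le_iff]
  constructor
  · rw [sub_le_iff_le_add]
    apply Finset.sup'_le
    intro a ha
    calc f a ≤ g a + |f a - g a| := by
          have := le_abs_self (f a - g a); linarith
      _ ≤ (s.sup' hs fun a => |f a - g a|) + s.sup' hs g :=
          (add_le_add (Finset.le_sup' _ ha) (Finset.le_sup' (fun a => |f a - g a|) ha)).trans_eq (add_comm _ _)
  · rw [sub_le_iff_le_add]
    apply Finset.sup'_le
    intro a ha
    calc g a ≤ f a + |f a - g a| := by
          have := neg_abs_le (f a - g a); linarith
      _ ≤ (s.sup' hs fun a => |f a - g a|) + s.sup' hs f :=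
          (add_le_add (Finset.le_sup' _ ha) (Finset.le_sup' (fun a => |f a - g a|) ha)).trans_eq (add_comm _ _)

/-- Max-pooling composed with an entrywise `η`-Lipschitz activation is
`m^{1/p}·η`-Lipschitz w.r.t. the entrywise `ℓ_p` norm, where each input entry is
used in at most `m` pooling windows. -/
theorem pool_comp_activation_lipschitz (M N d : ℕ) {ι : Type*} [Fintype ι]
    (σ : ℝ → ℝ) (η : ℝ) (hη : 0 ≤ η)
    (hσ : ∀ a b : ℝ, |σ a - σ b| ≤ η * |a - b|)
    (A : ι → Finset (Fin M × Fin N × Fin d)) (hA : ∀ i, (A i).Nonempty)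
    (m : ℕ) (hm : 0 < m)
    (hreuse : ∀ s : Fin M × Fin N × Fin d,
      (Finset.univ.filter (fun i : ι => s ∈ A i)).card ≤ m)
    (p : ℝ) (hp : 1 ≤ p)
    (X Y : Fin M × Fin N × Fin d → ℝ) :
    (∑ i : ι, |(A i).sup' (hA i) (fun s => σ (X s)) -
        (A i).sup' (hA i) (fun s => σ (Y s))| ^ p) ^ (1 / p) ≤
      (m : ℝ) ^ (1 / p) * η *
        (∑ s : Fin M × Fin N × Fin d, |X s - Y s| ^ p) ^ (1 / p) := by
  have hp0 : 0 < p := lt_of_lt_of_le one_pos hp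
  -- Step 1: termwise bound |sup' - sup'|^p ≤ η^p * ∑_{s ∈ A i} |X s - Y s|^p
  have key : ∀ i : ι,
      |(A i).sup' (hA i) (fun s => σ (X s)) -
        (A i).sup' (hA i) (fun s => σ (Y s))| ^ p ≤
      η ^ p * ∑ s ∈ A i, |X s - Y s| ^ p := by
    intro i
    obtain ⟨t, ht, hsup⟩ := Finset.exists_mem_eq_sup' (hA i)
      (fun s => |σ (X s) - σ (Y s)|)
    have h1 : |(A i).sup' (hA i) (fun s => σ (X s)) -
        (A i).sup' (hA i) (fun s => σ (Y s))| ≤ η * |X t - Y t| := by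
      calc _ ≤ (A i).sup' (hA i) (fun s => |σ (X s) - σ (Y s)|) :=
            abs_sup'_sub_sup'_le _ _ _ _
        _ = |σ (X t) - σ (Y t)| := hsup
        _ ≤ η * |X t - Y t| := hσ _ _
    calc |(A i).sup' (hA i) (fun s => σ (X s)) -
          (A i).sup' (hA i) (fun s => σ (Y s))| ^ p
        ≤ (η * |X t - Y t|) ^ p := by
          apply Real.rpow_le_rpow (abs_nonneg _) h1 hp0.le
      _ = η ^ p * |X t - Y t| ^ p :=
          Real.mul_rpow hη (abs_nonneg _)
      _ ≤ η ^ p * ∑ s ∈ A i, |X s - Y s| ^ p := by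
          apply mul_le_mul_of_nonneg_left _ (Real.rpow_nonneg hη p)
          exact Finset.single_le_sum (f := fun s => |X s - Y s| ^ p)
            (fun s _ => Real.rpow_nonneg (abs_nonneg _) p) ht
  -- Step 2: sum over i and use the reuse bound
  have step2 : (∑ i : ι, |(A i).sup' (hA i) (fun s => σ (X s)) -
      (A i).sup' (hA i) (fun s => σ (Y s))| ^ p) ≤
      (m : ℝ) * η ^ p * ∑ s : Fin M × Fin N × Fin d, |X s - Y s| ^ p := by
    calc (∑ i : ι, |(A i).sup' (hA i) (fun s => σ (X s)) -
        (A i).sup' (hA i) (fun s => σ (Y s))| ^ p)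
        ≤ ∑ i : ι, η ^ p * ∑ s ∈ A i, |X s - Y s| ^ p :=
          Finset.sum_le_sum fun i _ => key i
      _ = η ^ p * ∑ i : ι, ∑ s ∈ A i, |X s - Y s| ^ p := by
          rw [Finset.mul_sum]
      _ = η ^ p * ∑ s : Fin M × Fin N × Fin d,
            ((Finset.univ.filter (fun i : ι => s ∈ A i)).card : ℝ) *
              |X s - Y s| ^ p := by
          congr 1
          rw [Finset.sum_comm' (s := Finset.univ)
            (t := fun i => A i) (t' := Finset.univ)
            (s' := fun s => Finset.univ.filter (fun i => s ∈ A i))]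
          · simp [Finset.sum_const, nsmul_eq_mul]
          · intro i s; simp
      _ ≤ η ^ p * ∑ s : Fin M × Fin N × Fin d,
            (m : ℝ) * |X s - Y s| ^ p := by
          apply mul_le_mul_of_nonneg_left _ (Real.rpow_nonneg hη p)
          apply Finset.sum_le_sum
          intro s _
          apply mul_le_mul_of_nonneg_right _ (Real.rpow_nonneg (abs_nonneg _) p)
          exact_mod_cast hreuse s
      _ = (m : ℝ) * η ^ p * ∑ s : Fin M × Fin N × Fin d, |X s - Y s| ^ p := by
          rw [← Finset.mul_sum]; ring
  -- Step 3: apply (·)^(1/p)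
  have hsum0 : 0 ≤ ∑ s : Fin M × Fin N × Fin d, |X s - Y s| ^ p :=
    Finset.sum_nonneg fun s _ => Real.rpow_nonneg (abs_nonneg _) p
  have := Real.rpow_le_rpow
    (Finset.sum_nonneg fun i _ => Real.rpow_nonneg (abs_nonneg _) p)
    step2 (by positivity : (0:ℝ) ≤ 1 / p)
  refine this.trans (le_of_eq ?_)
  rw [Real.mul_rpow (by positivity) hsum0,
    Real.mul_rpow (by positivity) (Real.rpow_nonneg hη p),
    ← Real.rpow_mul hη, mul_one_div_cancel (ne_of_gt hp0), Real.rpow_one]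
end

section
/- Maurey-type sparsification: let V₁,…,V_N be elements of a Hilbert space with ‖Vᵢ‖ ≤ b for all i, and let x = Σᵢ cᵢVᵢ be a convex combination (cᵢ ≥ 0, Σcᵢ = 1). Then for every positive integer ω there exist indices i₁,…,i_ω (with repetition allowed) such that ‖x − (1/ω)Σ_{j=1}^{ω} V_{i_j}‖² ≤ b²/ω. -/
open Finset

/-- There exists an index where `f` is at most its weighted average. -/
lemma exists_le_weighted_avg {N : ℕ} (c : Fin N → ℝ) (f : Fin N → ℝ)
    (hc0 : ∀ i, 0 ≤ c i) (hc1 : ∑ i, c i = 1) :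
    ∃ i, f i ≤ ∑ i, c i * f i := by
  by_contra h
  push_neg at h
  have hNpos : ∃ i, 0 < c i := by
    by_contra h'
    push_neg at h'
    have : (∑ i, c i) = 0 := Finset.sum_eq_zero fun i _ => le_antisymm (h' i) (hc0 i)
    simp [this] at hc1
  obtain ⟨i0, hi0⟩ := hNpos
  have key : ∑ i, c i * (∑ j, c j * f j) < ∑ i, c i * f i := by
    apply Finset.sum_lt_sum
    · intro i _
      exact mul_le_mul_of_nonneg_left (le_of_lt (h i)) (hc0 i)
    · exact ⟨i0, Finset.mem_univ i0, by
        exact mul_lt_mul_of_pos_left (h i0) hi0⟩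
  rw [← Finset.sum_mul, hc1, one_mul] at key
  exact lt_irrefl _ key

/-- Maurey-type sparsification: a convex combination of vectors of norm at most
`b` in a real Hilbert space can be approximated by an average of `ω` of them
with squared error at most `b²/ω`. -/
theorem maurey_sparsification
    {E : Type*} [NormedAddCommGroup E] [InnerProductSpace ℝ E]
    (N : ℕ) (V : Fin N → E) (b : ℝ) (hb : ∀ i, ‖V i‖ ≤ b)
    (c : Fin N → ℝ) (hc0 : ∀ i, 0 ≤ c i) (hc1 : ∑ i, c i = 1)
    (x : E) (hx : x = ∑ i, c i • V i)
    (ω : ℕ) (hω : 0 < ω) :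
    ∃ idx : Fin ω → Fin N,
      ‖x - (1 / ω : ℝ) • ∑ j : Fin ω, V (idx j)‖ ^ 2 ≤ b ^ 2 / ω := by
  -- the centered vectors sum to zero
  have hzero : ∑ i, c i • (x - V i) = 0 := by
    simp only [smul_sub]
    rw [Finset.sum_sub_distrib, ← Finset.sum_smul, hc1, one_smul, hx, sub_self]
  -- the average squared distance from x is at most b²
  have hvar : ∑ i, c i * ‖x - V i‖ ^ 2 ≤ b ^ 2 := by
    have hexp : ∀ i : Fin N, ‖x - V i‖ ^ 2
        = ‖x‖ ^ 2 - 2 * inner ℝ x (V i) + ‖V i‖ ^ 2 := fun i => by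
      rw [norm_sub_sq_real]; try ring
    calc ∑ i, c i * ‖x - V i‖ ^ 2
        = ∑ i, (c i * ‖x‖ ^ 2 - 2 * (inner ℝ x (c i • V i) : ℝ) + c i * ‖V i‖ ^ 2) := by
          refine Finset.sum_congr rfl fun i _ => ?_
          rw [hexp i, inner_smul_right]; try ring
      _ = ‖x‖ ^ 2 - 2 * ‖x‖ ^ 2 + ∑ i, c i * ‖V i‖ ^ 2 := by
          rw [Finset.sum_add_distrib, Finset.sum_sub_distrib, ← Finset.sum_mul, hc1,
            one_mul, ← Finset.mul_sum, ← inner_sum, ← hx, real_inner_self_eq_norm_sq]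
          try ring
      _ ≤ ‖x‖ ^ 2 - 2 * ‖x‖ ^ 2 + b ^ 2 := by
          gcongr
          calc ∑ i, c i * ‖V i‖ ^ 2 ≤ ∑ i, c i * b ^ 2 := by
                refine Finset.sum_le_sum fun i _ => ?_
                exact mul_le_mul_of_nonneg_left
                  (by nlinarith [hb i, norm_nonneg (V i)]) (hc0 i)
            _ = b ^ 2 := by rw [← Finset.sum_mul, hc1, one_mul]
      _ ≤ b ^ 2 := by nlinarith [sq_nonneg ‖x‖]
  -- key step: for any vector a, there is an index i with ‖a + (x - Vᵢ)‖² ≤ ‖a‖² + b²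
  have hstep : ∀ a : E, ∃ i, ‖a + (x - V i)‖ ^ 2 ≤ ‖a‖ ^ 2 + b ^ 2 := by
    intro a
    obtain ⟨i, hi⟩ := exists_le_weighted_avg c (fun i => ‖a + (x - V i)‖ ^ 2) hc0 hc1
    refine ⟨i, hi.trans ?_⟩
    calc ∑ i, c i * ‖a + (x - V i)‖ ^ 2
        = ∑ i, (c i * ‖a‖ ^ 2 + 2 * (inner ℝ a (c i • (x - V i)) : ℝ)
            + c i * ‖x - V i‖ ^ 2) := by
          refine Finset.sum_congr rfl fun i _ => ?_
          rw [norm_add_sq_real, inner_smul_right]; ring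
      _ = ‖a‖ ^ 2 + 2 * (inner ℝ a (∑ i, c i • (x - V i)) : ℝ)
            + ∑ i, c i * ‖x - V i‖ ^ 2 := by
          rw [Finset.sum_add_distrib, Finset.sum_add_distrib, ← Finset.sum_mul, hc1,
            one_mul, ← Finset.mul_sum, ← inner_sum]
          try ring
      _ = ‖a‖ ^ 2 + ∑ i, c i * ‖x - V i‖ ^ 2 := by
          rw [hzero, inner_zero_right]; ring
      _ ≤ ‖a‖ ^ 2 + b ^ 2 := by linarith
  -- induction: for every k there is idx : Fin k → Fin N with ‖k•x - Σ‖² ≤ k b²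
  have main : ∀ k : ℕ, ∃ idx : Fin k → Fin N,
      ‖(k : ℝ) • x - ∑ j : Fin k, V (idx j)‖ ^ 2 ≤ k * b ^ 2 := by
    intro k
    induction k with
    | zero => exact ⟨fun j => j.elim0, by simp⟩
    | succ k ih =>
      obtain ⟨idx, hidx⟩ := ih
      obtain ⟨i, hi⟩ := hstep ((k : ℝ) • x - ∑ j : Fin k, V (idx j))
      refine ⟨Fin.snoc idx i, ?_⟩
      have hsum : ∑ j : Fin (k + 1), V ((Fin.snoc idx i : Fin (k + 1) → Fin N) j)
          = (∑ j : Fin k, V (idx j)) + V i := by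
        rw [Fin.sum_univ_castSucc]
        simp [Fin.snoc]
      rw [hsum]
      have harr : ((k : ℝ) + 1) • x - ((∑ j : Fin k, V (idx j)) + V i)
          = ((k : ℝ) • x - ∑ j : Fin k, V (idx j)) + (x - V i) := by
        rw [add_smul, one_smul]; abel
      push_cast
      rw [harr]
      calc ‖((k : ℝ) • x - ∑ j : Fin k, V (idx j)) + (x - V i)‖ ^ 2
          ≤ ‖(k : ℝ) • x - ∑ j : Fin k, V (idx j)‖ ^ 2 + b ^ 2 := hi
        _ ≤ k * b ^ 2 + b ^ 2 := by linarith
        _ = (k + 1) * b ^ 2 := by ring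
  obtain ⟨idx, hidx⟩ := main ω
  refine ⟨idx, ?_⟩
  have hωR : (0 : ℝ) < (ω : ℝ) := by exact_mod_cast hω
  have hrw : x - (1 / ω : ℝ) • ∑ j : Fin ω, V (idx j)
      = (1 / ω : ℝ) • ((ω : ℝ) • x - ∑ j : Fin ω, V (idx j)) := by
    rw [smul_sub, smul_smul]
    field_simp
    rw [one_smul]
  rw [hrw, norm_smul, mul_pow, Real.norm_eq_abs,
    abs_of_pos (by positivity : (0:ℝ) < 1 / ω), div_pow, one_pow]
  calc 1 / (ω : ℝ) ^ 2 * ‖(ω : ℝ) • x - ∑ j : Fin ω, V (idx j)‖ ^ 2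
      ≤ 1 / (ω : ℝ) ^ 2 * ((ω : ℝ) * b ^ 2) :=
        mul_le_mul_of_nonneg_left hidx (by positivity)
    _ = b ^ 2 / ω := by field_simp
end
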